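/- Any Hermitian operator S on A_I ⊗ A_O ⊗ B_I satisfying tr_{A_O}(S) ⪰ 0 and S^{T_{A_I}} ⪰ 0 is a non-classical CCDC witness: tr(S·W) ≥ 0 for every operator W of the form W = p(ρ^{A_I B_I} ⊗ 1^{A_O}) + (1−p) Σ_i q_i ρ_i^{A_I} ⊗ D_i^{A_O B_I} where p ∈ [0,1], ρ and ρ_i are density operators, the q_i form a probability distribution, and each D_i ⪰ 0 satisfies tr_{B_I}(D_i) = 1^{A_O}. -/

import Mathlib

open Matrix ComplexOrder Kronecker

lemma trace_nonneg_of_posSemidef {n : Type*} [Fintype n] [DecidableEq n]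
    {A : Matrix n n ℂ} (hA : A.PosSemidef) : 0 ≤ A.trace := by
  rw [Matrix.trace]
  refine Finset.sum_nonneg fun i _ => ?_
  exact hA.diag_nonneg

open scoped MatrixOrder in
lemma Matrix.posSemidef_iff_eq_transpose_mul_self {n : Type*} [Fintype n] [DecidableEq n]
    {A : Matrix n n ℂ} : A.PosSemidef ↔ ∃ B : Matrix n n ℂ, A = Bᴴ * B := by
  refine ⟨fun hA => ?_, fun ⟨B, hB⟩ => hB ▸ Matrix.posSemidef_conjTranspose_mul_self B⟩
  obtain ⟨B, hB⟩ := CStarAlgebra.nonneg_iff_eq_star_mul_self.mp hA.nonneg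
  exact ⟨B, hB⟩

lemma trace_mul_nonneg {n : Type*} [Fintype n] [DecidableEq n]
    {A B : Matrix n n ℂ} (hA : A.PosSemidef) (hB : B.PosSemidef) :
    0 ≤ (A * B).trace := by
  obtain ⟨C, rfl⟩ := Matrix.posSemidef_iff_eq_transpose_mul_self.mp hB
  rw [Matrix.trace_mul_comm, Matrix.mul_assoc, Matrix.trace_mul_comm]
  exact trace_nonneg_of_posSemidef (hA.mul_mul_conjTranspose_same C)

lemma kron_posSemidef {n m : Type*} [Fintype n] [DecidableEq n] [Fintype m] [DecidableEq m]
    {A : Matrix n n ℂ} {B : Matrix m m ℂ} (hA : A.PosSemidef) (hB : B.PosSemidef) :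
    (A ⊗ₖ B).PosSemidef := by
  obtain ⟨C, rfl⟩ := Matrix.posSemidef_iff_eq_transpose_mul_self.mp hA
  obtain ⟨E, rfl⟩ := Matrix.posSemidef_iff_eq_transpose_mul_self.mp hB
  rw [Matrix.mul_kronecker_mul]
  have : (Cᴴ ⊗ₖ Eᴴ) = (C ⊗ₖ E)ᴴ := by
    ext ⟨i,j⟩ ⟨k,l⟩
    simp [Matrix.conjTranspose_apply, mul_comm]
  rw [this]
  exact Matrix.posSemidef_conjTranspose_mul_self _

lemma trace_pt {α β : Type*} [Fintype α] [Fintype β]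
    (S : Matrix (α × β) (α × β) ℂ) (R : Matrix α α ℂ) (E : Matrix β β ℂ) :
    (S * (R ⊗ₖ E)).trace
      = ((Matrix.of fun p q : α × β => S (q.1, p.2) (p.1, q.2)) * (Rᵀ ⊗ₖ E)).trace := by
  simp only [Matrix.trace, Matrix.diag, Matrix.mul_apply, Matrix.of_apply,
    Matrix.kroneckerMap_apply, Matrix.transpose_apply]
  rw [← Finset.sum_product', ← Finset.sum_product']
  refine Finset.sum_equiv ⟨fun z => ((z.2.1, z.1.2), (z.1.1, z.2.2)),
    fun z => ((z.2.1, z.1.2), (z.1.1, z.2.2)), fun z => by ext <;> rfl, fun z => by ext <;> rfl⟩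
    (by simp) ?_
  rintro ⟨⟨a, b⟩, ⟨a', b'⟩⟩ _
  simp [mul_comm, mul_left_comm]

lemma trace_cc {α β γ : Type*} [Fintype α] [Fintype β] [Fintype γ] [DecidableEq β]
    (S : Matrix (α × β × γ) (α × β × γ) ℂ) (ρ : Matrix (α × γ) (α × γ) ℂ) :
    (S * (Matrix.of fun p' q' : α × β × γ =>
        ρ (p'.1, p'.2.2) (q'.1, q'.2.2) * (if p'.2.1 = q'.2.1 then 1 else 0))).trace
      = ((Matrix.of fun p q : α × γ =>
        ∑ a : β, S (p.1, a, p.2) (q.1, a, q.2)) * ρ).trace := by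
  simp only [Matrix.trace, Matrix.diag, Matrix.mul_apply, Matrix.of_apply,
    Fintype.sum_prod_type, Finset.sum_mul, mul_ite, ite_mul, mul_one, mul_zero, one_mul,
    zero_mul, Finset.sum_ite_irrel, Finset.sum_ite_eq, Finset.sum_ite_eq',
    Finset.mem_univ, if_true]
  refine Finset.sum_congr rfl fun i _ => ?_
  rw [Finset.sum_comm]
  refine Finset.sum_congr rfl fun b _ => ?_
  rw [Finset.sum_comm]
  refine Finset.sum_congr rfl fun j _ => ?_
  simp only [Finset.sum_const_zero, Fintype.sum_ite_eq, Fintype.sum_ite_eq']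
  rw [Finset.sum_comm]

/-- Any Hermitian operator `S` on `A_I ⊗ A_O ⊗ B_I` with `tr_{A_O}(S) ⪰ 0` and
`S^{T_{A_I}} ⪰ 0` is a non-classical CCDC witness: `tr(S·W) ≥ 0` for every classical
CCDC process `W = p (ρ^{A_I B_I} ⊗ 1^{A_O}) + (1-p) Σ_i q_i ρ_i^{A_I} ⊗ D_i^{A_O B_I}`. -/
theorem stmt_5 (nI nO nB m : ℕ)
    (S : Matrix (Fin nI × Fin nO × Fin nB) (Fin nI × Fin nO × Fin nB) ℂ)
    (hSh : S.IsHermitian)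
    (hS1 : (Matrix.of fun p q : Fin nI × Fin nB =>
      ∑ a : Fin nO, S (p.1, a, p.2) (q.1, a, q.2)).PosSemidef)
    (hS2 : (Matrix.of fun p q : Fin nI × Fin nO × Fin nB =>
      S (q.1, p.2) (p.1, q.2)).PosSemidef)
    (p : ℝ) (hp0 : 0 ≤ p) (hp1 : p ≤ 1)
    (ρ : Matrix (Fin nI × Fin nB) (Fin nI × Fin nB) ℂ)
    (hρ : ρ.PosSemidef) (hρtr : ρ.trace = 1)
    (q : Fin m → ℝ) (hq0 : ∀ i, 0 ≤ q i) (hq1 : ∑ i, q i = 1)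
    (ρs : Fin m → Matrix (Fin nI) (Fin nI) ℂ)
    (hρs : ∀ i, (ρs i).PosSemidef) (hρstr : ∀ i, (ρs i).trace = 1)
    (D : Fin m → Matrix (Fin nO × Fin nB) (Fin nO × Fin nB) ℂ)
    (hD : ∀ i, (D i).PosSemidef)
    (hDtr : ∀ i a a', (∑ b : Fin nB, D i (a, b) (a', b)) = if a = a' then 1 else 0)
    (W : Matrix (Fin nI × Fin nO × Fin nB) (Fin nI × Fin nO × Fin nB) ℂ)
    (hW : W = (p : ℂ) • (Matrix.of fun p' q' : Fin nI × Fin nO × Fin nB =>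
        ρ (p'.1, p'.2.2) (q'.1, q'.2.2) * (if p'.2.1 = q'.2.1 then 1 else 0))
      + ((1 - p : ℝ) : ℂ) • ∑ i, (q i : ℂ) •
        (Matrix.of fun p' q' : Fin nI × Fin nO × Fin nB =>
          ρs i p'.1 q'.1 * D i p'.2 q'.2)) :
    0 ≤ (S * W).trace := by
  subst hW
  have key1 : 0 ≤ (S * (Matrix.of fun p' q' : Fin nI × Fin nO × Fin nB =>
      ρ (p'.1, p'.2.2) (q'.1, q'.2.2) * (if p'.2.1 = q'.2.1 then 1 else 0))).trace := by
    rw [trace_cc]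
    exact trace_mul_nonneg hS1 hρ
  have key2 : ∀ i, 0 ≤ (S * (Matrix.of fun p' q' : Fin nI × Fin nO × Fin nB =>
      ρs i p'.1 q'.1 * D i p'.2 q'.2)).trace := by
    intro i
    have hX : (Matrix.of fun p' q' : Fin nI × Fin nO × Fin nB =>
        ρs i p'.1 q'.1 * D i p'.2 q'.2) = (ρs i) ⊗ₖ (D i) := rfl
    rw [hX, trace_pt]
    exact trace_mul_nonneg hS2 (kron_posSemidef ((hρs i).transpose) (hD i))
  rw [Matrix.mul_add, Matrix.trace_add, Matrix.mul_smul, Matrix.trace_smul,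
      Matrix.mul_smul, Matrix.mul_sum, Matrix.trace_smul]
  simp only [Matrix.mul_smul, Matrix.trace_sum, Matrix.trace_smul]
  refine add_nonneg ?_ ?_
  · rw [smul_eq_mul]
    exact mul_nonneg (by exact_mod_cast hp0) key1
  · rw [smul_eq_mul]
    refine mul_nonneg (by exact_mod_cast sub_nonneg.mpr hp1) ?_
    refine Finset.sum_nonneg fun i _ => ?_
    rw [smul_eq_mul]
    exact mul_nonneg (by exact_mod_cast hq0 i) (key2 i)
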